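/- Let K be a set of integers with 2 ≤ K_min and K_max ≤ √2·(K_min−1). Suppose there exists a PBD(v,K,1) with n blocks whose block sizes sum to N, where 2n−1 ≤ N. Then there exists an n×N complex matrix with (ℓ₁,t)-recoverability for every positive integer t ≤ √n/4. -/

import Mathlib

open scoped BigOperators

noncomputable def welch (n N : ℕ) : ℝ :=
  Real.sqrt (((N : ℝ) - n) / (((N : ℝ) - 1) * n))

/-- Normalised absolute inner product of columns `i` and `j` of `Φ`. -/
noncomputable def colCoh {m ι : Type*} [Fintype m] (Φ : Matrix m ι ℂ) (i j : ι) : ℝ :=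
  ‖∑ r, (starRingEnd ℂ) (Φ r i) * Φ r j‖ /
    (Real.sqrt (∑ r, ‖Φ r i‖ ^ 2) * Real.sqrt (∑ r, ‖Φ r j‖ ^ 2))

/-- `(ℓ₁,t)`-recoverability: every `t`-sparse `x` is the unique `ℓ₁`-minimizer among
solutions `z` of `Φ z = Φ x`. -/
def Recoverable {m ι : Type*} [Fintype m] [Fintype ι] [DecidableEq ι]
    (Φ : Matrix m ι ℂ) (t : ℕ) : Prop :=
  ∀ x : ι → ℂ, (Finset.univ.filter (fun i => x i ≠ 0)).card ≤ t →
    ∀ z : ι → ℂ, Φ.mulVec z = Φ.mulVec x → z ≠ x →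
      ∑ i, ‖x i‖ < ∑ i, ‖z i‖
/-- `B` is the block set of a pairwise balanced design with index `λ = 1` and block
sizes in `K`: every block has cardinality in `K`, and every pair of distinct points
lies in exactly one block. -/
def IsPBD {V : Type*} [DecidableEq V] (B : Finset (Finset V)) (K : Finset ℕ) : Prop :=
  (∀ b ∈ B, b.card ∈ K) ∧
  ∀ x y : V, x ≠ y → ∃! b : Finset V, b ∈ B ∧ x ∈ b ∧ y ∈ b

/-- The replication number of the point `x`: the number of blocks containing `x`. -/
def repl {V : Type*} [DecidableEq V] (B : Finset (Finset V)) (x : V) : ℕ :=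
  (B.filter (fun b => x ∈ b)).card

/-- A complex Hadamard matrix of order `r`: all entries of modulus 1 and
`H Hᴴ = r·I`. -/
def IsComplexHadamard {r : ℕ} (H : Matrix (Fin r) (Fin r) ℂ) : Prop :=
  (∀ i j, ‖H i j‖ = 1) ∧ H * H.conjTranspose = (r : ℂ) • 1

/-- Construction con0: rows indexed by blocks, columns indexed by pairs `(x,j)` with
`x ∈ V` and `j < r_x`; the entry in row `B` and column `(x,j)` is
`(1/√r_x)·(H_x)_{σ_x(B), j}` if `x ∈ B` and `0` otherwise. -/
noncomputable def con0 {V : Type*} [DecidableEq V] (B : Finset (Finset V))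
    (H : ∀ x : V, Matrix (Fin (repl B x)) (Fin (repl B x)) ℂ)
    (σ : ∀ x : V, {b : Finset V // b ∈ B ∧ x ∈ b} → Fin (repl B x)) :
    Matrix {b : Finset V // b ∈ B} (Σ x : V, Fin (repl B x)) ℂ :=
  fun b c =>
    if h : c.1 ∈ b.1 then
      ((Real.sqrt (repl B c.1))⁻¹ : ℝ) * H c.1 (σ c.1 ⟨b.1, b.2, h⟩) c.2
    else 0

open scoped BigOperators

/- ### Auxiliary machinery -/

/-- The DFT matrix of order `r`. -/
noncomputable def dftM (r : ℕ) : Matrix (Fin r) (Fin r) ℂ :=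
  fun p q => Complex.exp ((2 * Real.pi * p * q / r : ℝ) * Complex.I)

lemma dftM_norm (r : ℕ) (p q : Fin r) : ‖dftM r p q‖ = 1 := by
  rw [dftM, Complex.norm_exp_ofReal_mul_I]

lemma conj_ofReal_mul_I (x : ℝ) :
    (starRingEnd ℂ) ((x : ℂ) * Complex.I) = -((x : ℂ) * Complex.I) := by
  rw [map_mul, Complex.conj_ofReal, Complex.conj_I]; ring

lemma dftM_ortho (r : ℕ) (s s' : Fin r) (hss : s ≠ s') :
    ∑ p : Fin r, (starRingEnd ℂ) (dftM r p s) * dftM r p s' = 0 := by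
  have hr : 0 < r := s.pos
  have hrR : (0:ℝ) < r := by exact_mod_cast hr
  have hrC : (r : ℂ) ≠ 0 := by exact_mod_cast hr.ne'
  set d : ℝ := (s' : ℝ) - (s : ℝ) with hd
  have hd0 : d ≠ 0 := by
    intro h
    apply hss
    apply Fin.ext
    have h2 : (s':ℝ) = s := by rw [hd] at h; linarith
    exact_mod_cast h2.symm
  set ζ : ℂ := Complex.exp ((2 * Real.pi * d / r : ℝ) * Complex.I) with hζ
  have hterm : ∀ p : Fin r, (starRingEnd ℂ) (dftM r p s) * dftM r p s' = ζ ^ (p : ℕ) := by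
    intro p
    rw [dftM, dftM, ← Complex.exp_conj, conj_ofReal_mul_I, ← Complex.exp_add, hζ,
      ← Complex.exp_nat_mul]
    congr 1
    push_cast [hd]
    field_simp
    ring
  have hζ1 : ζ ≠ 1 := by
    intro h
    rw [Complex.exp_eq_one_iff] at h
    obtain ⟨k, hk⟩ := h
    have hk' : (2 * Real.pi * d / r : ℝ) = k * (2 * Real.pi) := by
      have h2 : ((2 * Real.pi * d / r : ℝ) : ℂ) * Complex.I
          = ((k * (2 * Real.pi) : ℝ) : ℂ) * Complex.I := by
        rw [hk]; push_cast; ring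
      exact_mod_cast mul_right_cancel₀ Complex.I_ne_zero h2
    have hdk : d = k * r := by
      field_simp at hk'
      nlinarith [Real.pi_pos, hk']
    have hk0 : k ≠ 0 := by
      intro h0; rw [h0] at hdk; simp at hdk; exact hd0 hdk
    have h1k : (1:ℝ) ≤ |(k:ℝ)| := by exact_mod_cast Int.one_le_abs hk0
    have hdlt : |d| < r := by
      rw [abs_lt]
      constructor
      · have h3 : (s : ℝ) < r := by exact_mod_cast s.isLt
        have h0 : (0:ℝ) ≤ (s' : ℝ) := by positivity
        simp only [hd]; linarith
      · have h3 : (s' : ℝ) < r := by exact_mod_cast s'.isLt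
        have h0 : (0:ℝ) ≤ (s : ℝ) := by positivity
        simp only [hd]; linarith
    rw [hdk, abs_mul, abs_of_pos hrR] at hdlt
    nlinarith
  calc ∑ p : Fin r, (starRingEnd ℂ) (dftM r p s) * dftM r p s'
      = ∑ p : Fin r, ζ ^ (p:ℕ) := Finset.sum_congr rfl fun p _ => hterm p
    _ = ∑ p ∈ Finset.range r, ζ ^ p := Fin.sum_univ_eq_sum_range _ r
    _ = (ζ ^ r - 1) / (ζ - 1) := geom_sum_eq hζ1 r
    _ = 0 := by
        have hzr : ζ ^ r = 1 := by
          rw [hζ, ← Complex.exp_nat_mul]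
          have h4 : (r : ℂ) * (((2 * Real.pi * d / r : ℝ) : ℂ) * Complex.I)
              = ((s' : ℤ) - (s : ℤ) : ℤ) * (2 * Real.pi * Complex.I) := by
            push_cast [hd]
            field_simp
          rw [h4, Complex.exp_int_mul_two_pi_mul_I]
        rw [hzr]; simp

/-- Summing a function vanishing off `P` equals summing over the subtype of `P`. -/
lemma sum_eq_sum_subtype_of_zero {α M : Type*} [Fintype α] [AddCommMonoid M]
    (P : α → Prop) [DecidablePred P] (f : α → M) (hf : ∀ a, ¬ P a → f a = 0) :
    ∑ a, f a = ∑ q : {a // P a}, f q.1 := by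
  rw [← Finset.sum_subtype (Finset.univ.filter P) (by simp) f]
  exact (Finset.sum_filter_of_ne (fun a _ hfa => by
    by_contra hP; exact hfa (hf a hP))).symm

lemma conj_real_mul (a b : ℝ) (z w : ℂ) :
    (starRingEnd ℂ) ((a:ℂ) * z) * ((b:ℂ) * w)
      = ((a * b : ℝ) : ℂ) * ((starRingEnd ℂ) z * w) := by
  rw [map_mul, Complex.conj_ofReal]; push_cast; ring

lemma recoverable_of_coherence {m ι : Type*} [Fintype m] [Fintype ι] [DecidableEq ι]
    (Φ : Matrix m ι ℂ) (μ : ℝ) (hμ0 : 0 ≤ μ)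
    (hnorm : ∀ i, ∑ r, (starRingEnd ℂ) (Φ r i) * Φ r i = 1)
    (hcoh : ∀ i j, i ≠ j → ‖∑ r, (starRingEnd ℂ) (Φ r i) * Φ r j‖ ≤ μ)
    (t : ℕ) (ht : (2 * (t:ℝ) - 1) * μ < 1) :
    Recoverable Φ t := by
  intro x hx z hz hne
  set h : ι → ℂ := z - x with hh
  have hΦh : Φ.mulVec h = 0 := by
    rw [hh, Matrix.mulVec_sub, hz, sub_self]
  set G : ι → ι → ℂ := fun i j => ∑ r, (starRingEnd ℂ) (Φ r i) * Φ r j with hG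
  have hGh : ∀ i, ∑ j, G i j * h j = 0 := by
    intro i
    have e1 : ∑ j, G i j * h j = ∑ r, (starRingEnd ℂ) (Φ r i) * Φ.mulVec h r := by
      simp only [hG, Matrix.mulVec, dotProduct, Finset.mul_sum, Finset.sum_mul]
      rw [Finset.sum_comm]
      exact Finset.sum_congr rfl fun r _ => Finset.sum_congr rfl fun j _ => by ring
    rw [e1, hΦh]
    simp
  set T : ℝ := ∑ j, ‖h j‖ with hT
  have hT0 : 0 < T := by
    have hne' : h ≠ 0 := by
      rw [hh, sub_ne_zero]; exact hne
    obtain ⟨i0, hi0⟩ := Function.ne_iff.mp hne'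
    refine Finset.sum_pos' (fun j _ => norm_nonneg _) ⟨i0, Finset.mem_univ _, ?_⟩
    simpa using hi0
  have key : ∀ i, ‖h i‖ * (1 + μ) ≤ μ * T := by
    intro i
    have hGii : G i i = 1 := hnorm i
    have hsplit : ∑ j ∈ Finset.univ.erase i, G i j * h j + G i i * h i = 0 := by
      rw [Finset.sum_erase_add _ _ (Finset.mem_univ i)]
      exact hGh i
    have hhi : h i = -∑ j ∈ Finset.univ.erase i, G i j * h j := by
      rw [hGii] at hsplit
      rw [eq_neg_iff_add_eq_zero]
      linear_combination hsplit
    have hb : ‖h i‖ ≤ μ * ∑ j ∈ Finset.univ.erase i, ‖h j‖ := by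
      rw [hhi, norm_neg]
      calc ‖∑ j ∈ Finset.univ.erase i, G i j * h j‖
          ≤ ∑ j ∈ Finset.univ.erase i, ‖G i j * h j‖ := norm_sum_le _ _
        _ ≤ ∑ j ∈ Finset.univ.erase i, μ * ‖h j‖ := by
            refine Finset.sum_le_sum fun j hj => ?_
            rw [norm_mul]
            exact mul_le_mul_of_nonneg_right
              (hcoh i j (fun hij => (Finset.ne_of_mem_erase hj) hij.symm)) (norm_nonneg _)
        _ = μ * ∑ j ∈ Finset.univ.erase i, ‖h j‖ := by rw [Finset.mul_sum]
    have herase : ∑ j ∈ Finset.univ.erase i, ‖h j‖ = T - ‖h i‖ := by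
      have := Finset.sum_erase_add Finset.univ (fun j => ‖h j‖) (Finset.mem_univ i)
      rw [hT]; linarith
    rw [herase] at hb
    nlinarith
  set S := Finset.univ.filter (fun i => x i ≠ 0) with hS
  have hSsum : (∑ i ∈ S, ‖h i‖) * (1 + μ) < (T / 2) * (1 + μ) := by
    have h1 : (∑ i ∈ S, ‖h i‖) * (1 + μ) ≤ (S.card : ℝ) * (μ * T) := by
      rw [Finset.sum_mul]
      calc ∑ i ∈ S, ‖h i‖ * (1 + μ) ≤ ∑ i ∈ S, μ * T := Finset.sum_le_sum fun i _ => key i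
        _ = (S.card : ℝ) * (μ * T) := by rw [Finset.sum_const, nsmul_eq_mul]
    have h2 : (S.card : ℝ) * (μ * T) ≤ (t : ℝ) * (μ * T) := by
      have : (S.card : ℝ) ≤ (t : ℝ) := by exact_mod_cast hx
      exact mul_le_mul_of_nonneg_right this (by positivity)
    have h3 : (t : ℝ) * (μ * T) < (T / 2) * (1 + μ) := by
      nlinarith [mul_pos hT0 (show (0:ℝ) < 1 - (2 * (t:ℝ) - 1) * μ by linarith)]
    linarith
  have hSlt : ∑ i ∈ S, ‖h i‖ < T / 2 :=
    lt_of_mul_lt_mul_right (by linarith [hSsum]) (by linarith : (0:ℝ) ≤ 1 + μ)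
  have hxS : ∑ i, ‖x i‖ = ∑ i ∈ S, ‖x i‖ := by
    symm
    refine Finset.sum_subset (Finset.filter_subset _ _) fun i _ hiS => ?_
    have : x i = 0 := by
      by_contra hxi
      exact hiS (Finset.mem_filter.mpr ⟨Finset.mem_univ _, hxi⟩)
    rw [this, norm_zero]
  have hzsplit : ∑ i, ‖z i‖
      = ∑ i ∈ S, ‖z i‖ + ∑ i ∈ Finset.univ.filter (fun i => ¬ x i ≠ 0), ‖z i‖ := by
    rw [hS, Finset.sum_filter_add_sum_filter_not]
  have hTsplit : ∑ i ∈ S, ‖h i‖ + ∑ i ∈ Finset.univ.filter (fun i => ¬ x i ≠ 0), ‖h i‖ = T := by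
    rw [hS, hT, Finset.sum_filter_add_sum_filter_not]
  have hnotS : ∑ i ∈ Finset.univ.filter (fun i => ¬ x i ≠ 0), ‖z i‖
      = ∑ i ∈ Finset.univ.filter (fun i => ¬ x i ≠ 0), ‖h i‖ := by
    refine Finset.sum_congr rfl fun i hi => ?_
    have hxi : x i = 0 := by simpa using (Finset.mem_filter.mp hi).2
    rw [hh]; simp [hxi]
  have hSz : ∑ i ∈ S, ‖x i‖ - ∑ i ∈ S, ‖h i‖ ≤ ∑ i ∈ S, ‖z i‖ := by
    rw [← Finset.sum_sub_distrib]
    refine Finset.sum_le_sum fun i _ => ?_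
    have hzi : z i = x i + h i := by rw [hh]; simp
    rw [hzi]
    have := norm_add_le (x i + h i) (-h i)
    simp only [add_neg_cancel_right, norm_neg] at this
    linarith
  rw [hxS, hzsplit, hnotS]
  linarith

set_option maxHeartbeats 2000000 in
/-- If `2 ≤ K_min`, `K_max ≤ √2 (K_min − 1)`, and there exists a `PBD(v,K,1)` with
`n` blocks whose block sizes sum to `N` with `2n − 1 ≤ N`, then there exists an
`n × N` complex matrix with `(ℓ₁,t)`-recoverability for all positive `t ≤ √n/4`. -/
theorem stmt_10 (K : Finset ℕ) (hKne : K.Nonempty) (hKmin : 2 ≤ K.min' hKne)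
    (hKmax : (K.max' hKne : ℝ) ≤ Real.sqrt 2 * ((K.min' hKne : ℝ) - 1))
    (v n N : ℕ) (hnN : 2 * n - 1 ≤ N)
    (hex : ∃ (V : Type) (_ : Fintype V) (_ : DecidableEq V) (B : Finset (Finset V)),
      Fintype.card V = v ∧ IsPBD B K ∧ B.card = n ∧ ∑ b ∈ B, b.card = N) :
    ∃ Φ : Matrix (Fin n) (Fin N) ℂ,
      ∀ t : ℕ, 0 < t → (t : ℝ) ≤ Real.sqrt n / 4 → Recoverable Φ t := by
  by_cases hc : Real.sqrt n / 4 < 1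
  · refine ⟨0, fun t ht htle => absurd htle (not_le.mpr ?_)⟩
    have h1 : (1:ℝ) ≤ t := by exact_mod_cast ht
    linarith
  push_neg at hc
  have hsn4 : 4 ≤ Real.sqrt n := by linarith
  have hsn0 : (0:ℝ) < Real.sqrt n := by linarith
  have hnR : (16:ℝ) ≤ n := by
    nlinarith [Real.sq_sqrt (by positivity : (0:ℝ) ≤ (n:ℝ))]
  have hn0 : 0 < n := by
    by_contra h0
    push_neg at h0
    interval_cases n <;> norm_num at hnR
  obtain ⟨V, _, _, B, hv, ⟨hK, hpair⟩, hn, hN⟩ := hex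
  set kmin := K.min' hKne with hkmin
  set kmax := K.max' hKne with hkmax
  have hmM : kmin ≤ kmax := Finset.min'_le _ _ (K.max'_mem hKne)
  have hkm4 : 4 ≤ kmin := by
    by_contra hlt
    push_neg at hlt
    have h3 : (kmin : ℝ) ≤ 3 := by exact_mod_cast Nat.lt_succ_iff.mp hlt
    have h2 : (2:ℝ) ≤ kmin := by exact_mod_cast hKmin
    have hmMR : (kmin:ℝ) ≤ kmax := by exact_mod_cast hmM
    have hch : (kmin:ℝ) ≤ Real.sqrt 2 * ((kmin:ℝ) - 1) := le_trans hmMR hKmax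
    have hsq : (kmin:ℝ) * kmin ≤ (Real.sqrt 2 * ((kmin:ℝ)-1)) * (Real.sqrt 2 * ((kmin:ℝ)-1)) :=
      mul_self_le_mul_self (by linarith) hch
    have h2' : Real.sqrt 2 * Real.sqrt 2 = 2 := Real.mul_self_sqrt (by norm_num)
    nlinarith
  -- B is nonempty and v ≥ 4
  have hBne : B.Nonempty := by
    rw [← Finset.card_pos, hn]; exact hn0
  have hv4 : 4 ≤ v := by
    obtain ⟨b, hb⟩ := hBne
    have h1 : kmin ≤ b.card := Finset.min'_le _ _ (hK b hb)
    have h2 : b.card ≤ v := by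
      rw [← hv, ← Finset.card_univ]
      exact Finset.card_le_card (Finset.subset_univ b)
    omega
  have hnontriv : Nontrivial V := by
    rw [← Fintype.one_lt_card_iff_nontrivial, hv]; omega
  -- every point is in some block
  have hr1 : ∀ x : V, 0 < repl B x := by
    intro x
    obtain ⟨y, hyx⟩ := exists_ne x
    obtain ⟨b, ⟨hbB, hxb, _⟩, _⟩ := hpair x y (Ne.symm hyx)
    rw [repl, Finset.card_pos]
    exact ⟨b, Finset.mem_filter.mpr ⟨hbB, hxb⟩⟩
  -- L1 : pair filter has exactly one element
  have L1 : ∀ x y : V, x ≠ y → (B.filter (fun b => x ∈ b ∧ y ∈ b)).card = 1 := by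
    intro x y hxy
    obtain ⟨b0, hb0, hun⟩ := hpair x y hxy
    rw [Finset.card_eq_one]
    refine ⟨b0, ?_⟩
    ext c
    simp only [Finset.mem_filter, Finset.mem_singleton]
    constructor
    · rintro ⟨hc, hxc, hyc⟩
      exact hun c ⟨hc, hxc, hyc⟩
    · rintro rfl
      exact ⟨hb0.1, hb0.2.1, hb0.2.2⟩
  -- L3 : blocks through x partition the other points
  have L3 : ∀ x : V, ∑ b ∈ B.filter (fun b => x ∈ b), (b.card - 1) = v - 1 := by
    intro x
    have hdisj : ∀ b1 ∈ B.filter (fun b => x ∈ b), ∀ b2 ∈ B.filter (fun b => x ∈ b),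
        b1 ≠ b2 → Disjoint (b1.erase x) (b2.erase x) := by
      intro b1 hb1 b2 hb2 hbne
      rw [Finset.disjoint_left]
      intro y hy1 hy2
      have hy1' := Finset.mem_erase.mp hy1
      have hy2' := Finset.mem_erase.mp hy2
      obtain ⟨bb, _, hun⟩ := hpair x y (Ne.symm hy1'.1)
      have e1 := hun b1 ⟨(Finset.mem_filter.mp hb1).1, (Finset.mem_filter.mp hb1).2, hy1'.2⟩
      have e2 := hun b2 ⟨(Finset.mem_filter.mp hb2).1, (Finset.mem_filter.mp hb2).2, hy2'.2⟩
      exact hbne (e1.trans e2.symm)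
    have hunion : (B.filter (fun b => x ∈ b)).biUnion (fun b => b.erase x)
        = Finset.univ.erase x := by
      ext y
      simp only [Finset.mem_biUnion, Finset.mem_filter, Finset.mem_erase, Finset.mem_univ,
        and_true]
      constructor
      · rintro ⟨b, ⟨_, _⟩, hyb, _⟩
        exact hyb
      · intro hyx
        obtain ⟨b, ⟨hbB, hxb, hyb⟩, _⟩ := hpair x y (Ne.symm hyx)
        exact ⟨b, ⟨hbB, hxb⟩, hyx, hyb⟩
    have hcb := Finset.card_biUnion hdisj
    rw [hunion, Finset.card_erase_of_mem (Finset.mem_univ x), Finset.card_univ, hv] at hcb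
    rw [hcb]
    exact Finset.sum_congr rfl fun b hb =>
      (Finset.card_erase_of_mem (Finset.mem_filter.mp hb).2).symm
  -- L4 : pair count: n * kmin*(kmin-1) ≤ v*(v-1)
  have L4 : n * (kmin * (kmin - 1)) ≤ v * (v - 1) := by
    have hdisj : ∀ b1 ∈ B, ∀ b2 ∈ B, b1 ≠ b2 → Disjoint b1.offDiag b2.offDiag := by
      intro b1 hb1 b2 hb2 hbne
      rw [Finset.disjoint_left]
      intro p hp1 hp2
      rw [Finset.mem_offDiag] at hp1 hp2
      obtain ⟨bb, _, hun⟩ := hpair p.1 p.2 hp1.2.2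
      have e1 := hun b1 ⟨hb1, hp1.1, hp1.2.1⟩
      have e2 := hun b2 ⟨hb2, hp2.1, hp2.2.1⟩
      exact hbne (e1.trans e2.symm)
    have hunion : B.biUnion (fun b => b.offDiag) = (Finset.univ : Finset V).offDiag := by
      ext p
      simp only [Finset.mem_biUnion, Finset.mem_offDiag, Finset.mem_univ, true_and]
      constructor
      · rintro ⟨b, _, _, _, hne⟩
        exact hne
      · intro hne
        obtain ⟨b, ⟨hbB, h1, h2⟩, _⟩ := hpair p.1 p.2 hne
        exact ⟨b, hbB, h1, h2, hne⟩
    have hcb := Finset.card_biUnion hdisj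
    rw [hunion, Finset.offDiag_card, Finset.card_univ, hv] at hcb
    have hvv : v * v - v = v * (v - 1) := by
      rw [Nat.mul_sub]; simp
    rw [hvv] at hcb
    have hsum : ∑ b ∈ B, b.offDiag.card = ∑ b ∈ B, b.card * (b.card - 1) :=
      Finset.sum_congr rfl fun b _ => by
        rw [Finset.offDiag_card, Nat.mul_sub]; simp
    rw [hsum] at hcb
    calc n * (kmin * (kmin - 1)) = B.card • (kmin * (kmin - 1)) := by rw [hn]; simp [mul_comm]
      _ ≤ ∑ b ∈ B, b.card * (b.card - 1) := by
          refine Finset.card_nsmul_le_sum _ _ _ fun b hb => ?_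
          exact Nat.mul_le_mul (Finset.min'_le _ _ (hK b hb))
            (Nat.sub_le_sub_right (Finset.min'_le _ _ (hK b hb)) 1)
      _ = v * (v - 1) := hcb.symm
  -- L5 : total degree
  have L5 : ∑ x : V, repl B x = N := by
    rw [← hN]
    simp only [repl, Finset.card_filter]
    rw [Finset.sum_comm]
    refine Finset.sum_congr rfl fun b _ => ?_
    rw [← Finset.card_filter, Finset.filter_univ_mem]
  -- replication lower bound
  have hrlb : ∀ x : V, Real.sqrt n / 2 ≤ (repl B x : ℝ) := by
    intro x
    have hnat : v - 1 ≤ repl B x * (kmax - 1) := by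
      rw [← L3 x]
      have := Finset.sum_le_card_nsmul (B.filter (fun b => x ∈ b))
        (fun b => b.card - 1) (kmax - 1)
        (fun b hb => Nat.sub_le_sub_right (Finset.le_max' _ _ (hK b (Finset.mem_filter.mp hb).1)) 1)
      simpa [repl, smul_eq_mul] using this
    have ha0 : (0:ℝ) < (repl B x : ℝ) := by exact_mod_cast hr1 x
    have hm4 : (4:ℝ) ≤ (kmin:ℝ) := by exact_mod_cast hkm4
    have hw4 : (4:ℝ) ≤ (v:ℝ) := by exact_mod_cast hv4
    have hmMR : (kmin:ℝ) ≤ (kmax:ℝ) := by exact_mod_cast hmM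
    have h1 : (v:ℝ) - 1 ≤ (repl B x : ℝ) * ((kmax:ℝ) - 1) := by
      have hc : ((v - 1 : ℕ):ℝ) ≤ ((repl B x * (kmax - 1) : ℕ):ℝ) := by exact_mod_cast hnat
      push_cast [Nat.cast_sub (show 1 ≤ v by omega), Nat.cast_sub (show 1 ≤ kmax by omega)] at hc
      linarith
    have h2 : (n : ℝ) * ((kmin:ℝ) * ((kmin:ℝ) - 1)) ≤ (v:ℝ) * ((v:ℝ) - 1) := by
      have hc : ((n * (kmin * (kmin - 1)) : ℕ):ℝ) ≤ ((v * (v - 1) : ℕ):ℝ) := by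
        exact_mod_cast L4
      push_cast [Nat.cast_sub (show 1 ≤ v by omega), Nat.cast_sub (show 1 ≤ kmin by omega)] at hc
      linarith
    have hMm : ((kmax:ℝ) - 1)^2 ≤ 2 * ((kmin:ℝ) - 1)^2 := by
      have hs2 : Real.sqrt 2 * Real.sqrt 2 = 2 := Real.mul_self_sqrt (by norm_num)
      have hb1 : (kmax:ℝ) - 1 ≤ Real.sqrt 2 * ((kmin:ℝ) - 1) := by linarith [hKmax]
      have hb0 : (0:ℝ) ≤ (kmax:ℝ) - 1 := by linarith
      nlinarith [mul_self_le_mul_self hb0 hb1]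
    have hkey : (n : ℝ) ≤ 4 * (repl B x : ℝ)^2 := by
      have hP1 : ((v:ℝ) - 1)^2 ≤ (repl B x : ℝ)^2 * ((kmax:ℝ) - 1)^2 := by
        nlinarith [mul_self_le_mul_self (by linarith : (0:ℝ) ≤ (v:ℝ) - 1) h1]
      have hP2 : ((v:ℝ) - 1)^2 ≤ 2 * (repl B x : ℝ)^2 * ((kmin:ℝ) - 1)^2 := by
        nlinarith [hP1, mul_le_mul_of_nonneg_left hMm (sq_nonneg (repl B x : ℝ))]
      have key0 : (v:ℝ) * ((kmin:ℝ) - 1) ≤ 2 * ((v:ℝ) - 1) * (kmin:ℝ) := by nlinarith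
      have hpos : (0:ℝ) < (kmin:ℝ) * ((kmin:ℝ) - 1) * ((kmin:ℝ) - 1)^2 := by nlinarith
      have c1 : (n:ℝ) * ((kmin:ℝ) * ((kmin:ℝ) - 1) * ((kmin:ℝ) - 1)^2)
          ≤ (v:ℝ) * ((v:ℝ) - 1) * ((kmin:ℝ) - 1)^2 := by
        nlinarith [mul_le_mul_of_nonneg_right h2 (sq_nonneg ((kmin:ℝ) - 1))]
      have c2 : (v:ℝ) * ((v:ℝ) - 1) * ((kmin:ℝ) - 1)^2
          ≤ 2 * ((v:ℝ) - 1)^2 * ((kmin:ℝ) * ((kmin:ℝ) - 1)) := by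
        nlinarith [mul_le_mul_of_nonneg_right key0
          (by nlinarith : (0:ℝ) ≤ ((v:ℝ) - 1) * ((kmin:ℝ) - 1))]
      have c3 : 2 * ((v:ℝ) - 1)^2 * ((kmin:ℝ) * ((kmin:ℝ) - 1))
          ≤ 4 * (repl B x : ℝ)^2 * ((kmin:ℝ) * ((kmin:ℝ) - 1) * ((kmin:ℝ) - 1)^2) := by
        nlinarith [mul_le_mul_of_nonneg_right hP2
          (by nlinarith : (0:ℝ) ≤ 2 * (kmin:ℝ) * ((kmin:ℝ) - 1))]
      have hch := le_trans c1 (le_trans c2 c3)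
      exact le_of_mul_le_mul_right (by linarith) hpos
    have h2a : Real.sqrt n ≤ 2 * (repl B x : ℝ) := by
      have hs : Real.sqrt n ≤ Real.sqrt ((2 * (repl B x : ℝ))^2) :=
        Real.sqrt_le_sqrt (by nlinarith)
      rwa [Real.sqrt_sq (by linarith)] at hs
    linarith
  -- ### construction
  have hcards : ∀ x : V, Fintype.card {b : Finset V // b ∈ B ∧ x ∈ b} = repl B x := by
    intro x
    rw [Fintype.card_subtype, repl]
    congr 1
    ext b
    simp
  let σ : ∀ x : V, {b : Finset V // b ∈ B ∧ x ∈ b} ≃ Fin (repl B x) :=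
    fun x => Fintype.equivFinOfCardEq (hcards x)
  let τ : ∀ x : V, {b : Finset V // b ∈ B} → Fin (repl B x) :=
    fun x b => if h : x ∈ b.1 then σ x ⟨b.1, b.2, h⟩ else ⟨0, hr1 x⟩
  have hτbij : ∀ x : V, Function.Bijective
      (fun q : {c : {b : Finset V // b ∈ B} // x ∈ c.1} => τ x q.1) := by
    intro x
    rw [Fintype.bijective_iff_injective_and_card]
    constructor
    · intro q q' hqq
      have hqq2 : τ x q.1 = τ x q'.1 := hqq
      have e1 : τ x q.1 = σ x ⟨q.1.1, q.1.2, q.2⟩ := dif_pos q.2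
      have e2 : τ x q'.1 = σ x ⟨q'.1.1, q'.1.2, q'.2⟩ := dif_pos q'.2
      rw [e1, e2] at hqq2
      replace hqq := hqq2
      have h3 := (σ x).injective hqq
      have hval : q.1.1 = q'.1.1 := Subtype.mk_eq_mk.mp h3
      exact Subtype.ext (Subtype.ext hval)
    · exact ((Fintype.card_congr
        (Equiv.subtypeSubtypeEquivSubtypeInter (· ∈ B) (x ∈ ·))).trans
          (hcards x)).trans (Fintype.card_fin _).symm
  set M : Matrix {b : Finset V // b ∈ B} (Σ x : V, Fin (repl B x)) ℂ :=
    fun b c => if c.1 ∈ b.1 then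
        (((Real.sqrt (repl B c.1))⁻¹ : ℝ) : ℂ) * dftM (repl B c.1) (τ c.1 b) c.2
      else 0 with hM
  have hsum_red : ∀ (x : V) (g : Fin (repl B x) → ℂ),
      (∑ b : {b : Finset V // b ∈ B}, if x ∈ b.1 then g (τ x b) else 0)
        = ∑ p : Fin (repl B x), g p := by
    intro x g
    rw [sum_eq_sum_subtype_of_zero (fun b : {b : Finset V // b ∈ B} => x ∈ b.1)
      (fun b => if x ∈ b.1 then g (τ x b) else 0) (fun b hb => if_neg hb)]
    exact Fintype.sum_bijective _ (hτbij x)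
      (fun q => if x ∈ q.1.1 then g (τ x q.1) else 0) g
      (fun q => by
        show (if x ∈ (q.1 : Finset V) then g (τ x q.1) else 0) = g (τ x q.1)
        rw [if_pos q.2])
  have hrC : ∀ x : V, ((repl B x : ℕ) : ℂ) ≠ 0 :=
    fun x => Nat.cast_ne_zero.mpr (hr1 x).ne'
  have hrR0 : ∀ x : V, (0:ℝ) ≤ (repl B x : ℝ) := fun x => by positivity
  -- column norms
  have hcolnorm : ∀ c : Σ x : V, Fin (repl B x),
      ∑ b : {b : Finset V // b ∈ B}, (starRingEnd ℂ) (M b c) * M b c = 1 := by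
    rintro ⟨x, s⟩
    have hterm : ∀ b : {b : Finset V // b ∈ B},
        (starRingEnd ℂ) (M b ⟨x, s⟩) * M b ⟨x, s⟩
          = if x ∈ b.1 then ((((repl B x : ℝ))⁻¹ : ℝ) : ℂ) else 0 := by
      intro b
      by_cases hb : x ∈ b.1
      · rw [hM]
        simp only [if_pos hb]
        rw [conj_real_mul, Complex.conj_mul', dftM_norm]
        rw [← mul_inv, Real.mul_self_sqrt (hrR0 x)]
        norm_num
      · rw [hM]; simp only [if_neg hb, map_zero, zero_mul]
    calc ∑ b : {b : Finset V // b ∈ B}, (starRingEnd ℂ) (M b ⟨x, s⟩) * M b ⟨x, s⟩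
        = ∑ b : {b : Finset V // b ∈ B},
            (if x ∈ b.1 then ((((repl B x : ℝ))⁻¹ : ℝ) : ℂ) else 0) :=
          Finset.sum_congr rfl fun b _ => hterm b
      _ = ∑ _p : Fin (repl B x), ((((repl B x : ℝ))⁻¹ : ℝ) : ℂ) :=
          hsum_red x (fun _ => ((((repl B x : ℝ))⁻¹ : ℝ) : ℂ))
      _ = 1 := by
          rw [Finset.sum_const, Finset.card_univ, Fintype.card_fin, nsmul_eq_mul]
          push_cast
          exact mul_inv_cancel₀ (hrC x)
  -- same-point orthogonality
  have hortho : ∀ (x : V) (s s' : Fin (repl B x)), s ≠ s' →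
      ∑ b : {b : Finset V // b ∈ B},
        (starRingEnd ℂ) (M b ⟨x, s⟩) * M b ⟨x, s'⟩ = 0 := by
    intro x s s' hss
    have hterm : ∀ b : {b : Finset V // b ∈ B},
        (starRingEnd ℂ) (M b ⟨x, s⟩) * M b ⟨x, s'⟩
          = if x ∈ b.1 then
              (((Real.sqrt (repl B x))⁻¹ * (Real.sqrt (repl B x))⁻¹ : ℝ) : ℂ)
                * ((starRingEnd ℂ) (dftM (repl B x) (τ x b) s)
                    * dftM (repl B x) (τ x b) s') else 0 := by
      intro b
      by_cases hb : x ∈ b.1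
      · rw [hM]; simp only [if_pos hb]; rw [conj_real_mul]
      · rw [hM]; simp only [if_neg hb, map_zero, zero_mul]
    calc ∑ b : {b : Finset V // b ∈ B}, (starRingEnd ℂ) (M b ⟨x, s⟩) * M b ⟨x, s'⟩
        = ∑ b : {b : Finset V // b ∈ B}, (if x ∈ b.1 then
              (((Real.sqrt (repl B x))⁻¹ * (Real.sqrt (repl B x))⁻¹ : ℝ) : ℂ)
                * ((starRingEnd ℂ) (dftM (repl B x) (τ x b) s)
                    * dftM (repl B x) (τ x b) s') else 0) :=
          Finset.sum_congr rfl fun b _ => hterm b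
      _ = ∑ p : Fin (repl B x),
            (((Real.sqrt (repl B x))⁻¹ * (Real.sqrt (repl B x))⁻¹ : ℝ) : ℂ)
              * ((starRingEnd ℂ) (dftM (repl B x) p s) * dftM (repl B x) p s') :=
          hsum_red x (fun p => (((Real.sqrt (repl B x))⁻¹ * (Real.sqrt (repl B x))⁻¹ : ℝ) : ℂ)
              * ((starRingEnd ℂ) (dftM (repl B x) p s) * dftM (repl B x) p s'))
      _ = 0 := by
          rw [← Finset.mul_sum, dftM_ortho (repl B x) s s' hss, mul_zero]
  -- the coherence constant
  set μ : ℝ := 2 / Real.sqrt n with hμ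
  have hμ0 : (0:ℝ) ≤ μ := by positivity
  have hcross : ∀ x y : V,
      ((Real.sqrt (repl B x))⁻¹ * (Real.sqrt (repl B y))⁻¹ : ℝ) ≤ μ := by
    intro x y
    have hx2 := hrlb x
    have hy2 := hrlb y
    have hsx : Real.sqrt (repl B x) * Real.sqrt (repl B y)
        = Real.sqrt ((repl B x : ℝ) * (repl B y : ℝ)) :=
      (Real.sqrt_mul (hrR0 x) _).symm
    have hss : Real.sqrt n * Real.sqrt n = n := Real.mul_self_sqrt (by positivity)
    have hprod : (n:ℝ)/4 ≤ (repl B x : ℝ) * (repl B y : ℝ) := by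
      nlinarith [mul_le_mul hx2 hy2 (by positivity) (by linarith : (0:ℝ) ≤ (repl B x : ℝ))]
    have hsge : Real.sqrt n / 2 ≤ Real.sqrt (repl B x) * Real.sqrt (repl B y) := by
      rw [hsx]
      have h14 : Real.sqrt ((n:ℝ)/4) = Real.sqrt n / 2 := by
        rw [show ((n:ℝ)/4) = (n:ℝ) * (1/2)^2 by ring,
          Real.sqrt_mul (by positivity), Real.sqrt_sq (by norm_num)]
        ring
      have := Real.sqrt_le_sqrt hprod
      linarith
    have h1 : (Real.sqrt (repl B x) * Real.sqrt (repl B y))⁻¹ ≤ (Real.sqrt n / 2)⁻¹ :=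
      inv_anti₀ (by linarith) hsge
    have heq : (Real.sqrt n / 2)⁻¹ = μ := by
      rw [hμ]; field_simp
    rw [← mul_inv]
    linarith
  -- full coherence bound
  have hcoh2 : ∀ c c' : (Σ x : V, Fin (repl B x)), c ≠ c' →
      ‖∑ b : {b : Finset V // b ∈ B}, (starRingEnd ℂ) (M b c) * M b c'‖ ≤ μ := by
    rintro ⟨x, s⟩ ⟨y, s'⟩ hcc
    by_cases hxy : x = y
    · subst hxy
      have hss : s ≠ s' := by
        intro h; exact hcc (by rw [h])
      rw [hortho x s s' hss, norm_zero]
      exact hμ0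
    · have hterm : ∀ b : {b : Finset V // b ∈ B},
          ‖(starRingEnd ℂ) (M b ⟨x, s⟩) * M b ⟨y, s'⟩‖
            = if x ∈ (b : Finset V) ∧ y ∈ (b : Finset V) then
                ((Real.sqrt (repl B x))⁻¹ * (Real.sqrt (repl B y))⁻¹ : ℝ) else 0 := by
        intro b
        by_cases hbx : x ∈ b.1
        · by_cases hby : y ∈ b.1
          · rw [hM]
            simp only [if_pos hbx, if_pos hby]
            rw [if_pos (show x ∈ (b : Finset V) ∧ y ∈ (b : Finset V) from ⟨hbx, hby⟩), norm_mul, RCLike.norm_conj, norm_mul, norm_mul,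
              Complex.norm_real, Complex.norm_real, dftM_norm, dftM_norm,
              Real.norm_eq_abs, Real.norm_eq_abs,
              abs_of_nonneg (by positivity), abs_of_nonneg (by positivity)]
            ring
          · rw [hM]
            simp only [if_neg hby]
            rw [if_neg (show ¬(x ∈ (b : Finset V) ∧ y ∈ (b : Finset V)) from fun h => hby h.2)]
            simp
        · rw [hM]
          simp only [if_neg hbx]
          rw [if_neg (show ¬(x ∈ (b : Finset V) ∧ y ∈ (b : Finset V)) from fun h => hbx h.1)]
          simp
      calc ‖∑ b : {b : Finset V // b ∈ B}, (starRingEnd ℂ) (M b ⟨x, s⟩) * M b ⟨y, s'⟩‖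
          ≤ ∑ b : {b : Finset V // b ∈ B}, ‖(starRingEnd ℂ) (M b ⟨x, s⟩) * M b ⟨y, s'⟩‖ :=
            norm_sum_le _ _
        _ = ∑ b : {b : Finset V // b ∈ B}, (if x ∈ (b : Finset V) ∧ y ∈ (b : Finset V) then
                ((Real.sqrt (repl B x))⁻¹ * (Real.sqrt (repl B y))⁻¹ : ℝ) else 0) :=
            Finset.sum_congr rfl fun b _ => hterm b
        _ = ∑ b ∈ B, (if x ∈ b ∧ y ∈ b then
                ((Real.sqrt (repl B x))⁻¹ * (Real.sqrt (repl B y))⁻¹ : ℝ) else 0) :=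
            Finset.sum_coe_sort B (fun b => if x ∈ b ∧ y ∈ b then
              ((Real.sqrt (repl B x))⁻¹ * (Real.sqrt (repl B y))⁻¹ : ℝ) else 0)
        _ = ∑ _b ∈ B.filter (fun b => x ∈ b ∧ y ∈ b),
              ((Real.sqrt (repl B x))⁻¹ * (Real.sqrt (repl B y))⁻¹ : ℝ) :=
            (Finset.sum_filter _ _).symm
        _ = ((Real.sqrt (repl B x))⁻¹ * (Real.sqrt (repl B y))⁻¹ : ℝ) := by
            rw [Finset.sum_const, L1 x y hxy, one_smul]
        _ ≤ μ := hcross x y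
  -- assemble the matrix on Fin n × Fin N
  have hcardB : Fintype.card {b : Finset V // b ∈ B} = n := by
    rw [Fintype.card_coe, hn]
  have hcardC : Fintype.card (Σ x : V, Fin (repl B x)) = N := by
    rw [Fintype.card_sigma]
    simp only [Fintype.card_fin]
    exact L5
  set eb : {b : Finset V // b ∈ B} ≃ Fin n := Fintype.equivFinOfCardEq hcardB with heb
  set ec : (Σ x : V, Fin (repl B x)) ≃ Fin N := Fintype.equivFinOfCardEq hcardC with hec
  refine ⟨Matrix.of (fun i j => M (eb.symm i) (ec.symm j)), ?_⟩
  intro t ht htle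
  apply recoverable_of_coherence _ μ hμ0
  · intro j
    have h0 := hcolnorm (ec.symm j)
    rwa [← Equiv.sum_comp eb.symm
      (fun b => (starRingEnd ℂ) (M b (ec.symm j)) * M b (ec.symm j))] at h0
  · intro j j' hjj
    have hcc : ec.symm j ≠ ec.symm j' := fun h => hjj (ec.symm.injective h)
    have h0 := hcoh2 (ec.symm j) (ec.symm j') hcc
    rwa [← Equiv.sum_comp eb.symm
      (fun b => (starRingEnd ℂ) (M b (ec.symm j)) * M b (ec.symm j'))] at h0
  · have h1 : 2 * (t:ℝ) - 1 ≤ Real.sqrt n / 2 - 1 := by linarith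
    have h2 : (2 * (t:ℝ) - 1) * μ ≤ (Real.sqrt n / 2 - 1) * μ :=
      mul_le_mul_of_nonneg_right h1 hμ0
    have h3 : (Real.sqrt n / 2 - 1) * μ = 1 - 2 / Real.sqrt n := by
      rw [hμ]; field_simp
    have h4 : (0:ℝ) < 2 / Real.sqrt n := by positivity
    linarith
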